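/- arXiv:0906.3499 — 2 statements merged into one kernel-verified Lean document; each statement's English description precedes it below -/
import Mathlib

section
/- Suppose b = 𝒜X_r + e where X_r has rank at most r, and 𝒜 satisfies the RIP with δ_{3r}(𝒜) < 1/√32. Then the IHT iterates X^k (with Y^{k+1} = X^k − 𝒜*(𝒜X^k − b) and X^{k+1} = R_r(Y^{k+1})) satisfy ‖X_r − X^k‖_F ≤ 2^{-k} ‖X_r − X^0‖_F + 4.34 ‖e‖₂ for every k ≥ 0. -/
set_option maxHeartbeats 1000000


open scoped BigOperators
open Matrix

noncomputable section

/-- Frobenius (trace) inner product of real matrices. -/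
def frobInner {m n : ℕ} (X Y : Matrix (Fin m) (Fin n) ℝ) : ℝ :=
  ∑ i, ∑ j, X i j * Y i j

/-- Frobenius norm of a real matrix. -/
def frobNorm {m n : ℕ} (X : Matrix (Fin m) (Fin n) ℝ) : ℝ :=
  Real.sqrt (frobInner X X)

/-- Euclidean norm of a vector in ℝ^p. -/
def vecNorm {p : ℕ} (b : Fin p → ℝ) : ℝ :=
  Real.sqrt (∑ i, b i ^ 2)

/-- `X` is a best rank-`r` approximation (in Frobenius norm) of `Y`. -/
def IsBestRankApprox {m n : ℕ} (r : ℕ) (Y X : Matrix (Fin m) (Fin n) ℝ) : Prop :=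
  X.rank ≤ r ∧ ∀ Z : Matrix (Fin m) (Fin n) ℝ, Z.rank ≤ r → frobNorm (X - Y) ≤ frobNorm (Z - Y)

namespace IHTAux

variable {m n p : ℕ}

lemma frobInner_comm (X Y : Matrix (Fin m) (Fin n) ℝ) : frobInner X Y = frobInner Y X := by
  unfold frobInner
  exact Finset.sum_congr rfl fun i _ => Finset.sum_congr rfl fun j _ => mul_comm _ _

lemma frobInner_self_nonneg (X : Matrix (Fin m) (Fin n) ℝ) : 0 ≤ frobInner X X :=
  Finset.sum_nonneg fun i _ => Finset.sum_nonneg fun j _ => mul_self_nonneg _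

lemma frobNorm_nonneg (X : Matrix (Fin m) (Fin n) ℝ) : 0 ≤ frobNorm X := Real.sqrt_nonneg _

lemma frobNorm_sq (X : Matrix (Fin m) (Fin n) ℝ) : frobNorm X ^ 2 = frobInner X X :=
  Real.sq_sqrt (frobInner_self_nonneg X)

lemma vecNorm_nonneg (v : Fin p → ℝ) : 0 ≤ vecNorm v := Real.sqrt_nonneg _

lemma vecNorm_sq (v : Fin p → ℝ) : vecNorm v ^ 2 = ∑ i, v i ^ 2 :=
  Real.sq_sqrt (Finset.sum_nonneg fun i _ => sq_nonneg _)

lemma frobInner_sub_right (X Y Z : Matrix (Fin m) (Fin n) ℝ) :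
    frobInner X (Y - Z) = frobInner X Y - frobInner X Z := by
  unfold frobInner
  rw [← Finset.sum_sub_distrib]
  refine Finset.sum_congr rfl fun i _ => ?_
  rw [← Finset.sum_sub_distrib]
  exact Finset.sum_congr rfl fun j _ => by simp [Matrix.sub_apply]; ring

lemma frobInner_smul_left (c : ℝ) (X Y : Matrix (Fin m) (Fin n) ℝ) :
    frobInner (c • X) Y = c * frobInner X Y := by
  unfold frobInner
  rw [Finset.mul_sum]
  refine Finset.sum_congr rfl fun i _ => ?_
  rw [Finset.mul_sum]
  exact Finset.sum_congr rfl fun j _ => by simp [Matrix.smul_apply]; ring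

lemma frobInner_smul_right (c : ℝ) (X Y : Matrix (Fin m) (Fin n) ℝ) :
    frobInner X (c • Y) = c * frobInner X Y := by
  rw [frobInner_comm, frobInner_smul_left, frobInner_comm]

lemma frobInner_zero_left (Y : Matrix (Fin m) (Fin n) ℝ) : frobInner 0 Y = 0 := by
  simp [frobInner]

lemma frobNorm_eq_zero {X : Matrix (Fin m) (Fin n) ℝ} (h : frobNorm X = 0) : X = 0 := by
  have h0 : frobInner X X = 0 :=
    le_antisymm (Real.sqrt_eq_zero'.mp h) (frobInner_self_nonneg X)
  have hsum : ∀ i ∈ Finset.univ, ∑ j, X i j * X i j = 0 := by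
    rw [frobInner] at h0
    exact (Finset.sum_eq_zero_iff_of_nonneg fun i _ =>
      Finset.sum_nonneg fun j _ => mul_self_nonneg _).mp h0
  ext i j
  have := (Finset.sum_eq_zero_iff_of_nonneg fun j _ => mul_self_nonneg (X i j)).mp
    (hsum i (Finset.mem_univ i)) j (Finset.mem_univ j)
  have := mul_self_eq_zero.mp this
  simp [this]

/-- `⟨U-V, U-V⟩ = ⟨U,U⟩ - 2⟨U,V⟩ + ⟨V,V⟩`. -/
lemma frobInner_sub_self (U V : Matrix (Fin m) (Fin n) ℝ) :
    frobInner (U - V) (U - V) = frobInner U U - 2 * frobInner U V + frobInner V V := by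
  unfold frobInner
  rw [Finset.mul_sum, ← Finset.sum_sub_distrib, ← Finset.sum_add_distrib]
  refine Finset.sum_congr rfl fun i _ => ?_
  rw [Finset.mul_sum, ← Finset.sum_sub_distrib, ← Finset.sum_add_distrib]
  refine Finset.sum_congr rfl fun j _ => ?_
  simp [Matrix.sub_apply]; ring

lemma frobInner_add_self (U V : Matrix (Fin m) (Fin n) ℝ) :
    frobInner (U + V) (U + V) = frobInner U U + 2 * frobInner U V + frobInner V V := by
  unfold frobInner
  rw [Finset.mul_sum, ← Finset.sum_add_distrib, ← Finset.sum_add_distrib]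
  refine Finset.sum_congr rfl fun i _ => ?_
  rw [Finset.mul_sum, ← Finset.sum_add_distrib, ← Finset.sum_add_distrib]
  refine Finset.sum_congr rfl fun j _ => ?_
  simp [Matrix.add_apply]; ring

lemma frobNorm_sub_comm (U V : Matrix (Fin m) (Fin n) ℝ) :
    frobNorm (U - V) = frobNorm (V - U) := by
  unfold frobNorm
  congr 1
  unfold frobInner
  exact Finset.sum_congr rfl fun i _ => Finset.sum_congr rfl fun j _ => by
    simp [Matrix.sub_apply]; ring

lemma rank_smul_le (c : ℝ) (A : Matrix (Fin m) (Fin n) ℝ) : (c • A).rank ≤ A.rank := by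
  rw [Matrix.rank, Matrix.rank]
  apply Submodule.finrank_mono
  rintro x ⟨v, rfl⟩
  exact ⟨c • v, by simp [Matrix.mulVecLin_apply, Matrix.mulVec_smul, Matrix.smul_mulVec]⟩

lemma rank_add_le' (A B : Matrix (Fin m) (Fin n) ℝ) : (A + B).rank ≤ A.rank + B.rank := by
  rw [Matrix.rank, Matrix.rank, Matrix.rank]
  refine le_trans (Submodule.finrank_mono ?_)
    (Submodule.finrank_add_le_finrank_add_finrank _ _)
  rw [Matrix.mulVecLin_add]
  rintro x ⟨v, rfl⟩
  exact Submodule.mem_sup.mpr ⟨_, ⟨v, rfl⟩, _, ⟨v, rfl⟩, rfl⟩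

end IHTAux

open IHTAux

/-- Theorem 4.2: geometric convergence of IHT for exact rank-r data. -/
theorem iht_convergence {m n p r : ℕ}
    (A : Matrix (Fin m) (Fin n) ℝ →ₗ[ℝ] (Fin p → ℝ))
    (Aadj : (Fin p → ℝ) →ₗ[ℝ] Matrix (Fin m) (Fin n) ℝ)
    (hadj : ∀ (X : Matrix (Fin m) (Fin n) ℝ) (c : Fin p → ℝ),
      ∑ i, A X i * c i = frobInner (Aadj c) X)
    (δ : ℝ) (hδ : 0 ≤ δ) (hδsmall : δ < 1 / Real.sqrt 32)
    (hRIP : ∀ X : Matrix (Fin m) (Fin n) ℝ, X.rank ≤ 3 * r →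
      (1 - δ) * frobNorm X ^ 2 ≤ vecNorm (A X) ^ 2 ∧
        vecNorm (A X) ^ 2 ≤ (1 + δ) * frobNorm X ^ 2)
    (Xr : Matrix (Fin m) (Fin n) ℝ) (hXr : Xr.rank ≤ r)
    (e : Fin p → ℝ) (b : Fin p → ℝ) (hb : b = A Xr + e)
    (X : ℕ → Matrix (Fin m) (Fin n) ℝ) (Y : ℕ → Matrix (Fin m) (Fin n) ℝ)
    (hX0 : (X 0).rank ≤ r)
    (hY : ∀ k, Y (k + 1) = X k - Aadj (A (X k) - b))
    (hXstep : ∀ k, IsBestRankApprox r (Y (k + 1)) (X (k + 1))) :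
    ∀ k, frobNorm (Xr - X k) ≤
      (1 / 2 : ℝ) ^ k * frobNorm (Xr - X 0) + 4.34 * vecNorm e := by
  -- numeric facts
  have hs32 : (5.65 : ℝ) ≤ Real.sqrt 32 := by
    nlinarith [Real.sq_sqrt (by norm_num : (0:ℝ) ≤ 32), Real.sqrt_nonneg 32]
  have hδ' : δ ≤ 0.177225 := by
    have h1 : 1 / Real.sqrt 32 ≤ 1 / 5.65 :=
      one_div_le_one_div_of_le (by norm_num) hs32
    have h2 : (1:ℝ) / 5.65 ≤ 0.177225 := by norm_num
    linarith
  have hsqrt : Real.sqrt (1 + δ) ≤ 1.085 := by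
    have h1085 : ((1.085:ℝ)) ^ 2 = 1.177225 := by norm_num
    have h1 : (1 + δ : ℝ) ≤ 1.085 ^ 2 := by rw [h1085]; linarith
    calc Real.sqrt (1 + δ) ≤ Real.sqrt ((1.085:ℝ) ^ 2) := Real.sqrt_le_sqrt h1
      _ = 1.085 := Real.sqrt_sq (by norm_num)
  have hsqrt0 : (0:ℝ) ≤ Real.sqrt (1 + δ) := Real.sqrt_nonneg _
  have he0 : 0 ≤ vecNorm e := vecNorm_nonneg e
  set C : ℝ := 2 * Real.sqrt (1 + δ) with hC
  have hC0 : 0 ≤ C := by rw [hC]; positivity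
  have hC217 : C ≤ 2.17 := by rw [hC]; linarith
  -- key RIP polarization bound
  have key : ∀ U V : Matrix (Fin m) (Fin n) ℝ, (U + V).rank ≤ 3 * r → (U - V).rank ≤ 3 * r →
      |frobInner U V - ∑ i, A U i * A V i| ≤ δ / 2 * (frobNorm U ^ 2 + frobNorm V ^ 2) := by
    intro U V h1 h2
    obtain ⟨l1, u1⟩ := hRIP (U + V) h1
    obtain ⟨l2, u2⟩ := hRIP (U - V) h2
    have eP : vecNorm (A (U + V)) ^ 2
        = vecNorm (A U) ^ 2 + 2 * (∑ i, A U i * A V i) + vecNorm (A V) ^ 2 := by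
      rw [vecNorm_sq, vecNorm_sq, vecNorm_sq, map_add, Finset.mul_sum,
        ← Finset.sum_add_distrib, ← Finset.sum_add_distrib]
      exact Finset.sum_congr rfl fun i _ => by simp [Pi.add_apply]; ring
    have eM : vecNorm (A (U - V)) ^ 2
        = vecNorm (A U) ^ 2 - 2 * (∑ i, A U i * A V i) + vecNorm (A V) ^ 2 := by
      rw [vecNorm_sq, vecNorm_sq, vecNorm_sq, map_sub, Finset.mul_sum,
        ← Finset.sum_sub_distrib, ← Finset.sum_add_distrib]
      exact Finset.sum_congr rfl fun i _ => by simp [Pi.sub_apply]; ring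
    have fP : frobNorm (U + V) ^ 2 = frobNorm U ^ 2 + 2 * frobInner U V + frobNorm V ^ 2 := by
      rw [frobNorm_sq, frobNorm_sq, frobNorm_sq, frobInner_add_self]
    have fM : frobNorm (U - V) ^ 2 = frobNorm U ^ 2 - 2 * frobInner U V + frobNorm V ^ 2 := by
      rw [frobNorm_sq, frobNorm_sq, frobNorm_sq, frobInner_sub_self]
    rw [eP, fP] at u1 l1
    rw [eM, fM] at u2 l2
    rw [abs_le]
    constructor <;> linarith [l1, u1, l2, u2]
  -- scaled version
  have key2 : ∀ D E : Matrix (Fin m) (Fin n) ℝ,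
      (∀ a bb : ℝ, (a • D + bb • E).rank ≤ 3 * r) →
      frobInner D E - (∑ i, A D i * A E i) ≤ δ * frobNorm D * frobNorm E := by
    intro D E hrk
    rcases eq_or_ne (frobNorm D) 0 with hD | hD
    · have hD0 : D = 0 := frobNorm_eq_zero hD
      subst hD0
      simp [frobInner, frobNorm, map_zero]
    rcases eq_or_ne (frobNorm E) 0 with hE | hE
    · have hE0 : E = 0 := frobNorm_eq_zero hE
      subst hE0
      simp [frobInner, frobNorm, map_zero]
    have hD' : 0 < frobNorm D := lt_of_le_of_ne (frobNorm_nonneg D) (Ne.symm hD)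
    have hE' : 0 < frobNorm E := lt_of_le_of_ne (frobNorm_nonneg E) (Ne.symm hE)
    have h1 : (frobNorm E • D + frobNorm D • E).rank ≤ 3 * r := hrk _ _
    have h2 : (frobNorm E • D - frobNorm D • E).rank ≤ 3 * r := by
      have := hrk (frobNorm E) (-(frobNorm D))
      rwa [neg_smul, ← sub_eq_add_neg] at this
    have hkey := key (frobNorm E • D) (frobNorm D • E) h1 h2
    have e1 : frobInner (frobNorm E • D) (frobNorm D • E)
        = frobNorm E * frobNorm D * frobInner D E := by
      rw [frobInner_smul_left, frobInner_smul_right]; ring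
    have e2 : (∑ i, A (frobNorm E • D) i * A (frobNorm D • E) i)
        = frobNorm E * frobNorm D * ∑ i, A D i * A E i := by
      rw [A.map_smul, A.map_smul, Finset.mul_sum]
      exact Finset.sum_congr rfl fun i _ => by simp [Pi.smul_apply, smul_eq_mul]; ring
    have e3 : frobNorm (frobNorm E • D) ^ 2 = frobNorm E ^ 2 * frobNorm D ^ 2 := by
      rw [frobNorm_sq, frobInner_smul_left, frobInner_smul_right, ← frobNorm_sq]; ring
    have e4 : frobNorm (frobNorm D • E) ^ 2 = frobNorm D ^ 2 * frobNorm E ^ 2 := by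
      rw [frobNorm_sq, frobInner_smul_left, frobInner_smul_right, ← frobNorm_sq]; ring
    rw [e1, e2, e3, e4] at hkey
    have habs := (abs_le.mp hkey).2
    nlinarith [habs, mul_pos hE' hD']
  -- rank of combinations
  have hrank3 : ∀ (a bb c : ℝ) (P Q : Matrix (Fin m) (Fin n) ℝ), P.rank ≤ r → Q.rank ≤ r →
      (a • P + bb • Q + c • Xr).rank ≤ 3 * r := by
    intro a bb c P Q hP hQ
    calc (a • P + bb • Q + c • Xr).rank
        ≤ (a • P + bb • Q).rank + (c • Xr).rank := rank_add_le' _ _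
      _ ≤ ((a • P).rank + (bb • Q).rank) + (c • Xr).rank :=
          Nat.add_le_add_right (rank_add_le' _ _) _
      _ ≤ r + r + r :=
          add_le_add (add_le_add ((rank_smul_le a P).trans hP)
            ((rank_smul_le bb Q).trans hQ)) ((rank_smul_le c Xr).trans hXr)
      _ = 3 * r := by ring
  -- one step of the iteration
  have step : ∀ k, (X k).rank ≤ r →
      frobNorm (Xr - X (k+1)) ≤ 2 * δ * frobNorm (Xr - X k) + C * vecNorm e := by
    intro k hrk
    have hrkP : (X (k+1)).rank ≤ r := (hXstep k).1
    set P := X (k+1) with hP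
    set N := Y (k+1) with hN
    set D : Matrix (Fin m) (Fin n) ℝ := P - Xr with hD
    set E : Matrix (Fin m) (Fin n) ℝ := X k - Xr with hE
    have hcombo : ∀ a bb : ℝ, (a • D + bb • E).rank ≤ 3 * r := by
      intro a bb
      have hcomb : a • D + bb • E = a • P + bb • X k + (-(a + bb)) • Xr := by
        rw [hD, hE]; module
      rw [hcomb]
      exact hrank3 a bb (-(a+bb)) P (X k) hrkP hrk
    have hrkD : D.rank ≤ 3 * r := by
      have hid : D = (1:ℝ) • D + (0:ℝ) • E := by module
      rw [hid]; exact hcombo 1 0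
    have h1 : frobNorm (P - N) ≤ frobNorm (Xr - N) := (hXstep k).2 Xr hXr
    have h1sq : frobInner (P - N) (P - N) ≤ frobInner (Xr - N) (Xr - N) := by
      rw [← frobNorm_sq, ← frobNorm_sq]
      exact pow_le_pow_left₀ (frobNorm_nonneg _) h1 2
    have h2 : frobInner D D ≤ 2 * frobInner D (N - Xr) := by
      have idA := frobInner_sub_self D (N - Xr)
      have hDN : D - (N - Xr) = P - N := by rw [hD]; abel
      rw [hDN] at idA
      have idB : frobInner (Xr - N) (Xr - N) = frobInner (N - Xr) (N - Xr) := by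
        calc frobInner (Xr - N) (Xr - N) = frobNorm (Xr - N) ^ 2 := (frobNorm_sq _).symm
          _ = frobNorm (N - Xr) ^ 2 := by rw [frobNorm_sub_comm]
          _ = frobInner (N - Xr) (N - Xr) := frobNorm_sq _
      linarith [h1sq, idA, idB]
    have hAE : A (X k) - b = A E - e := by
      rw [hb, hE, map_sub]; abel
    have hNXr : N - Xr = E - Aadj (A E - e) := by
      rw [hN, hY k, hAE, hE]; abel
    have hsplit : frobInner D (N - Xr)
        = frobInner D E - ((∑ i, A D i * A E i) - ∑ i, A D i * e i) := by
      rw [hNXr, frobInner_sub_right]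
      congr 1
      rw [frobInner_comm, ← hadj D (A E - e), ← Finset.sum_sub_distrib]
      exact Finset.sum_congr rfl fun i _ => by simp [Pi.sub_apply, mul_sub]
    have hIE : frobInner D E - (∑ i, A D i * A E i) ≤ δ * frobNorm D * frobNorm E :=
      key2 D E hcombo
    have hT : (∑ i, A D i * e i) ≤ Real.sqrt (1 + δ) * frobNorm D * vecNorm e := by
      have cs := Real.sum_mul_le_sqrt_mul_sqrt Finset.univ (fun i => A D i) e
      have hAD : Real.sqrt (∑ i, A D i ^ 2) ≤ Real.sqrt (1 + δ) * frobNorm D := by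
        have hrip := (hRIP D hrkD).2
        rw [vecNorm_sq] at hrip
        have hle : Real.sqrt (∑ i, A D i ^ 2) ≤ Real.sqrt ((1 + δ) * frobNorm D ^ 2) :=
          Real.sqrt_le_sqrt hrip
        rwa [Real.sqrt_mul (by linarith) _, Real.sqrt_sq (frobNorm_nonneg D)] at hle
      have hve : vecNorm e = Real.sqrt (∑ i, e i ^ 2) := rfl
      calc (∑ i, A D i * e i) ≤ Real.sqrt (∑ i, A D i ^ 2) * Real.sqrt (∑ i, e i ^ 2) := cs
        _ ≤ Real.sqrt (1 + δ) * frobNorm D * vecNorm e := by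
            rw [hve]
            exact mul_le_mul_of_nonneg_right hAD (Real.sqrt_nonneg _)
    have hDD : frobNorm D ^ 2 ≤ 2 * δ * frobNorm D * frobNorm E
        + C * frobNorm D * vecNorm e := by
      rw [frobNorm_sq]
      calc frobInner D D ≤ 2 * frobInner D (N - Xr) := h2
        _ = 2 * (frobInner D E - (∑ i, A D i * A E i)) + 2 * (∑ i, A D i * e i) := by
            rw [hsplit]; ring
        _ ≤ 2 * (δ * frobNorm D * frobNorm E)
            + 2 * (Real.sqrt (1+δ) * frobNorm D * vecNorm e) := by linarith
        _ = 2 * δ * frobNorm D * frobNorm E + C * frobNorm D * vecNorm e := by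
            rw [hC]; ring
    have hfinal : frobNorm D ≤ 2 * δ * frobNorm E + C * vecNorm e := by
      rcases eq_or_lt_of_le (frobNorm_nonneg D) with h0 | h0
      · rw [← h0]
        have p1 : 0 ≤ 2 * δ * frobNorm E :=
          mul_nonneg (mul_nonneg (by norm_num) hδ) (frobNorm_nonneg E)
        have p2 : 0 ≤ C * vecNorm e := mul_nonneg hC0 he0
        linarith
      · have hsq : frobNorm D ^ 2 = frobNorm D * frobNorm D := sq (frobNorm D) ▸ rfl
        have h' : frobNorm D * frobNorm D
            ≤ frobNorm D * (2 * δ * frobNorm E + C * vecNorm e) := by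
          rw [← hsq]; nlinarith [hDD]
        exact le_of_mul_le_mul_left h' h0
    have hDn : frobNorm (Xr - P) = frobNorm D := by rw [hD]; exact frobNorm_sub_comm _ _
    have hEn : frobNorm (Xr - X k) = frobNorm E := by rw [hE]; exact frobNorm_sub_comm _ _
    rw [show X (k+1) = P from hP.symm ▸ rfl] at *
    rw [hDn, hEn]
    exact hfinal
  -- induction
  have main : ∀ k, (X k).rank ≤ r ∧
      frobNorm (Xr - X k) ≤ (1/2:ℝ)^k * frobNorm (Xr - X 0) + 2 * C * vecNorm e := by
    intro k
    induction k with
    | zero =>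
      refine ⟨hX0, ?_⟩
      have p2 : 0 ≤ C * vecNorm e := mul_nonneg hC0 he0
      simp only [pow_zero, one_mul]
      linarith
    | succ k ih =>
      obtain ⟨hrk, hbd⟩ := ih
      refine ⟨(hXstep k).1, ?_⟩
      have hstep := step k hrk
      have hEnn : 0 ≤ frobNorm (Xr - X k) := frobNorm_nonneg _
      calc frobNorm (Xr - X (k+1))
          ≤ 2 * δ * frobNorm (Xr - X k) + C * vecNorm e := hstep
        _ ≤ (1/2) * frobNorm (Xr - X k) + C * vecNorm e := by nlinarith [hδ']
        _ ≤ (1/2) * ((1/2:ℝ)^k * frobNorm (Xr - X 0) + 2*C*vecNorm e) + C * vecNorm e := by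
            linarith
        _ = (1/2:ℝ)^(k+1) * frobNorm (Xr - X 0) + 2*C*vecNorm e := by ring
  intro k
  have hk := (main k).2
  have hfin : 2 * C * vecNorm e ≤ 4.34 * vecNorm e := by nlinarith [hC217, he0]
  linarith
end
end

section
/- Suppose b = 𝒜X_r + e where X_r has rank at most r, 𝒜 satisfies the RIP with δ_{3r}(𝒜) < 1/√32, and μ > 0. Define the IHTMS iteration: Y^{k+1} = X^k − 𝒜*(𝒜X^k − b), X^{k+1} = R_r(S_μ(Y^{k+1})). Then for every k ≥ 0, ‖X_r − X^k‖_F ≤ 2^{-k} ‖X_r − X^0‖_F + 4.34 ‖e‖₂ + 4μ√m (for matrices in ℝ^{m×n} with m ≤ n). -/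
open scoped BigOperators
open Matrix

noncomputable section

/-- Rectangular diagonal matrix with diagonal entries σ. -/
def rectDiag {m n : ℕ} (σ : Fin m → ℝ) : Matrix (Fin m) (Fin n) ℝ :=
  Matrix.of fun i j => if (j : ℕ) = (i : ℕ) then σ i else 0

/-- `(U, σ, V)` is a (full) singular value decomposition of `Y`, with the
singular values σ nonnegative and nonincreasing. -/
def IsSVD {m n : ℕ} (Y : Matrix (Fin m) (Fin n) ℝ) (U : Matrix (Fin m) (Fin m) ℝ)
    (σ : Fin m → ℝ) (V : Matrix (Fin n) (Fin n) ℝ) : Prop :=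
  Uᵀ * U = 1 ∧ Vᵀ * V = 1 ∧ (∀ i, 0 ≤ σ i) ∧ (∀ i j : Fin m, i ≤ j → σ j ≤ σ i) ∧
    Y = U * rectDiag σ * Vᵀ

/-- `Z = S_μ(Y)`: soft shrinkage of the singular values of `Y` by `μ`. -/
def IsSoftShrink {m n : ℕ} (μ : ℝ) (Y Z : Matrix (Fin m) (Fin n) ℝ) : Prop :=
  ∃ U σ V, IsSVD Y U σ V ∧ Z = U * rectDiag (fun i => max (σ i - μ) 0) * Vᵀ

/-- `Z = R_r(Y)`: hard thresholding keeping the `r` largest singular values of `Y`. -/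
def IsHardThresh {m n : ℕ} (r : ℕ) (Y Z : Matrix (Fin m) (Fin n) ℝ) : Prop :=
  ∃ U σ V, IsSVD Y U σ V ∧ Z = U * rectDiag (fun i => if (i : ℕ) < r then σ i else 0) * Vᵀ

/-! ### Auxiliary lemmas -/

section Aux

open scoped RealInnerProductSpace

variable {m n p : ℕ}

/-- Identification of matrices with Euclidean space. -/
def matE {m n : ℕ} (X : Matrix (Fin m) (Fin n) ℝ) : EuclideanSpace ℝ (Fin m × Fin n) :=
  WithLp.toLp 2 (fun q : Fin m × Fin n => X q.1 q.2)

/-- Identification of vectors with Euclidean space. -/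
def vecE {p : ℕ} (b : Fin p → ℝ) : EuclideanSpace ℝ (Fin p) := WithLp.toLp 2 b

lemma frobInner_eq (X Y : Matrix (Fin m) (Fin n) ℝ) :
    frobInner X Y = ⟪matE X, matE Y⟫ := by
  rw [PiLp.inner_apply, Fintype.sum_prod_type]
  simp [frobInner, matE, RCLike.inner_apply, mul_comm]

lemma frobNorm_eq (X : Matrix (Fin m) (Fin n) ℝ) : frobNorm X = ‖matE X‖ := by
  rw [frobNorm, frobInner_eq, real_inner_self_eq_norm_sq, Real.sqrt_sq (norm_nonneg _)]

lemma frobNorm_nonneg (X : Matrix (Fin m) (Fin n) ℝ) : 0 ≤ frobNorm X :=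
  Real.sqrt_nonneg _

lemma frobNorm_sq (X : Matrix (Fin m) (Fin n) ℝ) : frobNorm X ^ 2 = frobInner X X := by
  rw [frobNorm_eq, frobInner_eq, real_inner_self_eq_norm_sq]

lemma vecNorm_eq (b : Fin p → ℝ) : vecNorm b = ‖vecE b‖ := by
  rw [EuclideanSpace.norm_eq, vecNorm]
  congr 1
  refine Finset.sum_congr rfl fun i _ => ?_
  rw [Real.norm_eq_abs, sq_abs]; rfl

lemma vecNorm_nonneg (b : Fin p → ℝ) : 0 ≤ vecNorm b := Real.sqrt_nonneg _

lemma vecNorm_sq (b : Fin p → ℝ) : vecNorm b ^ 2 = ∑ i, b i ^ 2 :=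
  Real.sq_sqrt (Finset.sum_nonneg fun i _ => sq_nonneg _)

lemma matE_add (X Y : Matrix (Fin m) (Fin n) ℝ) : matE (X + Y) = matE X + matE Y := rfl
lemma matE_sub (X Y : Matrix (Fin m) (Fin n) ℝ) : matE (X - Y) = matE X - matE Y := rfl
lemma matE_smul (c : ℝ) (X : Matrix (Fin m) (Fin n) ℝ) : matE (c • X) = c • matE X := rfl

lemma matE_eq_zero {X : Matrix (Fin m) (Fin n) ℝ} (h : matE X = 0) : X = 0 := by
  ext i j
  have := congrArg (fun v => v (i, j)) h
  simpa [matE] using this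

lemma frobNorm_eq_zero {X : Matrix (Fin m) (Fin n) ℝ} (h : frobNorm X = 0) : X = 0 := by
  rw [frobNorm_eq] at h
  exact matE_eq_zero (norm_eq_zero.mp h)

lemma frobInner_comm (X Y : Matrix (Fin m) (Fin n) ℝ) : frobInner X Y = frobInner Y X := by
  simp [frobInner, mul_comm]

lemma frobInner_le (X Y : Matrix (Fin m) (Fin n) ℝ) :
    frobInner X Y ≤ frobNorm X * frobNorm Y := by
  rw [frobInner_eq, frobNorm_eq, frobNorm_eq]
  exact real_inner_le_norm _ _

/-- Cross term expansion. -/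
lemma frobInner_expand (a c : Matrix (Fin m) (Fin n) ℝ) :
    frobInner (c - a) (c - a) =
      frobInner a a - frobInner c c + 2 * frobInner (c - a) c := by
  simp only [frobInner_eq, matE_sub]
  simp only [inner_sub_left, inner_sub_right]
  rw [real_inner_comm (matE a) (matE c)]
  ring

lemma frobInner_add_right (X Y Z : Matrix (Fin m) (Fin n) ℝ) :
    frobInner X (Y + Z) = frobInner X Y + frobInner X Z := by
  simp [frobInner, mul_add, Finset.sum_add_distrib]

lemma frobInner_sub_right (X Y Z : Matrix (Fin m) (Fin n) ℝ) :
    frobInner X (Y - Z) = frobInner X Y - frobInner X Z := by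
  simp [frobInner, mul_sub, Finset.sum_sub_distrib]

/-- rank of a scalar multiple. -/
lemma rank_smul_le (c : ℝ) (M : Matrix (Fin m) (Fin n) ℝ) : (c • M).rank ≤ M.rank := by
  have : c • M = (c • (1 : Matrix (Fin m) (Fin m) ℝ)) * M := by
    rw [Matrix.smul_mul, Matrix.one_mul]
  rw [this]
  exact Matrix.rank_mul_le_right _ _

lemma rank_add_le (A B : Matrix (Fin m) (Fin n) ℝ) : (A + B).rank ≤ A.rank + B.rank := by
  classical
  rw [Matrix.rank, Matrix.rank, Matrix.rank]
  have hle : LinearMap.range (A + B).mulVecLin ≤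
      LinearMap.range A.mulVecLin ⊔ LinearMap.range B.mulVecLin := by
    rintro x ⟨v, rfl⟩
    rw [Matrix.mulVecLin_add]
    exact Submodule.mem_sup.mpr ⟨A.mulVecLin v, ⟨v, rfl⟩, B.mulVecLin v, ⟨v, rfl⟩, rfl⟩
  calc Module.finrank ℝ (LinearMap.range (A + B).mulVecLin)
      ≤ Module.finrank ℝ
        ↥(LinearMap.range A.mulVecLin ⊔ LinearMap.range B.mulVecLin) :=
        Submodule.finrank_mono hle
    _ ≤ _ := Submodule.finrank_add_le_finrank_add_finrank _ _

lemma rank_three {r : ℕ} (P Q R : Matrix (Fin m) (Fin n) ℝ)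
    (hP : P.rank ≤ r) (hQ : Q.rank ≤ r) (hR : R.rank ≤ r) (a b c : ℝ) :
    (a • P + b • Q + c • R).rank ≤ 3 * r := by
  have h1 : (a • P + b • Q + c • R).rank ≤ (a • P + b • Q).rank + (c • R).rank :=
    rank_add_le _ _
  have h2 : (a • P + b • Q).rank ≤ (a • P).rank + (b • Q).rank := rank_add_le _ _
  have := rank_smul_le a P
  have := rank_smul_le b Q
  have := rank_smul_le c R
  omega

/-- Frobenius inner product as a trace. -/
lemma frobInner_eq_trace (X Y : Matrix (Fin m) (Fin n) ℝ) :
    frobInner X Y = (Xᵀ * Y).trace := by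
  simp only [Matrix.trace, Matrix.diag, Matrix.mul_apply, Matrix.transpose_apply, frobInner]
  rw [Finset.sum_comm]

/-- Frobenius norm is invariant under multiplication by matrices with orthonormal columns. -/
lemma frobNorm_unitary {U : Matrix (Fin m) (Fin m) ℝ} {V : Matrix (Fin n) (Fin n) ℝ}
    (hU : Uᵀ * U = 1) (hV : Vᵀ * V = 1) (M : Matrix (Fin m) (Fin n) ℝ) :
    frobNorm (U * M * Vᵀ) = frobNorm M := by
  unfold frobNorm
  congr 1
  rw [frobInner_eq_trace, frobInner_eq_trace]
  have h1 : (U * M * Vᵀ)ᵀ * (U * M * Vᵀ) = V * (Mᵀ * M) * Vᵀ := by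
    have ht : (U * M * Vᵀ)ᵀ = Vᵀᵀ * (Mᵀ * Uᵀ) := by
      rw [Matrix.transpose_mul, Matrix.transpose_mul]
    rw [ht, Matrix.transpose_transpose]
    simp only [Matrix.mul_assoc]
    rw [← Matrix.mul_assoc Uᵀ U, hU, Matrix.one_mul]
  rw [h1, Matrix.trace_mul_comm, ← Matrix.mul_assoc, hV, Matrix.one_mul]

lemma frobInner_rectDiag (hmn : m ≤ n) (τ : Fin m → ℝ) :
    frobInner (rectDiag τ : Matrix (Fin m) (Fin n) ℝ) (rectDiag τ) = ∑ i, τ i ^ 2 := by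
  unfold frobInner rectDiag
  refine Finset.sum_congr rfl fun i _ => ?_
  have hi : (i : ℕ) < n := lt_of_lt_of_le i.2 hmn
  rw [Finset.sum_eq_single (⟨(i : ℕ), hi⟩ : Fin n)]
  · simp [sq]
  · intro j _ hj
    have : ¬((j : ℕ) = (i : ℕ)) := by
      intro h
      exact hj (Fin.ext h)
    simp [this]
  · intro h
    exact absurd (Finset.mem_univ _) h

/-- Distance moved by soft shrinkage. -/
lemma softShrink_dist (hmn : m ≤ n) {μ : ℝ} (hμ : 0 ≤ μ)
    {Y Z : Matrix (Fin m) (Fin n) ℝ} (h : IsSoftShrink μ Y Z) :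
    frobNorm (Y - Z) ≤ μ * Real.sqrt m := by
  obtain ⟨U, σ, V, ⟨hU, hV, hσ, _, hYdec⟩, hZ⟩ := h
  replace hZ : Z = U * (rectDiag (fun i => max (σ i - μ) 0) : Matrix (Fin m) (Fin n) ℝ) * Vᵀ := hZ
  have hYZ : Y - Z = U * (rectDiag (fun i => σ i - max (σ i - μ) 0) : Matrix (Fin m) (Fin n) ℝ) * Vᵀ := by
    rw [hYdec, hZ]
    have : rectDiag (fun i => σ i - max (σ i - μ) 0) =
        rectDiag σ - (rectDiag (fun i => max (σ i - μ) 0) : Matrix (Fin m) (Fin n) ℝ) := by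
      ext i j
      simp only [rectDiag, Matrix.of_apply, Matrix.sub_apply]
      split <;> simp
    rw [this, Matrix.mul_sub, Matrix.sub_mul]
    rfl
  rw [hYZ, frobNorm_unitary hU hV]
  have hbound : frobInner (rectDiag (fun i => σ i - max (σ i - μ) 0) :
      Matrix (Fin m) (Fin n) ℝ) (rectDiag (fun i => σ i - max (σ i - μ) 0)) ≤ (m : ℝ) * μ ^ 2 := by
    rw [frobInner_rectDiag hmn]
    calc ∑ i, (σ i - max (σ i - μ) 0) ^ 2 ≤ ∑ _i : Fin m, μ ^ 2 := by
          refine Finset.sum_le_sum fun i _ => ?_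
          have h1 : 0 ≤ σ i - max (σ i - μ) 0 := by
            rcases le_total (σ i - μ) 0 with h | h
            · rw [max_eq_right h]; simpa using hσ i
            · rw [max_eq_left h]; linarith
          have h2 : σ i - max (σ i - μ) 0 ≤ μ := by
            rcases le_total (σ i - μ) 0 with h | h
            · rw [max_eq_right h]; linarith
            · rw [max_eq_left h]; linarith
          nlinarith
      _ = (m : ℝ) * μ ^ 2 := by simp [Finset.sum_const, Finset.card_univ, mul_comm]
  calc frobNorm (rectDiag (fun i => σ i - max (σ i - μ) 0) : Matrix (Fin m) (Fin n) ℝ)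
      ≤ Real.sqrt ((m : ℝ) * μ ^ 2) := Real.sqrt_le_sqrt hbound
    _ = μ * Real.sqrt m := by
        rw [mul_comm (m : ℝ) (μ ^ 2), Real.sqrt_mul (sq_nonneg μ), Real.sqrt_sq hμ]

/-- Key RIP cross-term bound. -/
lemma key_cross {m n p r : ℕ}
    (A : Matrix (Fin m) (Fin n) ℝ →ₗ[ℝ] (Fin p → ℝ))
    {δ : ℝ} (hδ : 0 ≤ δ)
    (hRIP : ∀ X : Matrix (Fin m) (Fin n) ℝ, X.rank ≤ 3 * r →
      (1 - δ) * frobNorm X ^ 2 ≤ vecNorm (A X) ^ 2 ∧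
        vecNorm (A X) ^ 2 ≤ (1 + δ) * frobNorm X ^ 2)
    (W D : Matrix (Fin m) (Fin n) ℝ)
    (hrk : ∀ a b : ℝ, (a • W + b • D).rank ≤ 3 * r) :
    frobInner W D - ∑ i, A W i * A D i ≤ δ * frobNorm W * frobNorm D := by
  set w := frobNorm W with hw_def
  set d := frobNorm D with hd_def
  have hw0 : 0 ≤ w := frobNorm_nonneg W
  have hd0 : 0 ≤ d := frobNorm_nonneg D
  rcases eq_or_lt_of_le hw0 with hw | hw
  · have hW : W = 0 := frobNorm_eq_zero hw.symm
    subst hW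
    simp [frobInner, map_zero A, ← hw]
  rcases eq_or_lt_of_le hd0 with hd | hd
  · have hD : D = 0 := frobNorm_eq_zero hd.symm
    subst hD
    simp [frobInner, map_zero A, ← hd]
  -- main case
  set P := d • W + w • D with hP_def
  set Q := d • W + (-w) • D with hQ_def
  have hPrk := hrk d w
  have hQrk := hrk d (-w)
  have h1 := (hRIP P hPrk).1
  have h2 := (hRIP Q hQrk).2
  set t := frobInner W D with ht_def
  set β := ∑ i, A W i * A D i with hβ_def
  set α := ∑ i, A W i * A W i with hα_def
  set γ := ∑ i, A D i * A D i with hγ_def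
  -- expansions
  have hWW : frobInner W W = w ^ 2 := (frobNorm_sq W).symm
  have hDD : frobInner D D = d ^ 2 := (frobNorm_sq D).symm
  have hexp : ∀ a b : ℝ, frobInner (a • W + b • D) (a • W + b • D) =
      a ^ 2 * w ^ 2 + 2 * a * b * t + b ^ 2 * d ^ 2 := by
    intro a b
    simp only [frobInner_eq, matE_add, matE_smul]
    simp only [inner_add_left, inner_add_right, real_inner_smul_left, real_inner_smul_right]
    rw [real_inner_comm (matE D) (matE W)]
    rw [← frobInner_eq W W, ← frobInner_eq D D, ← frobInner_eq D W, hWW, hDD,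
      frobInner_comm D W, ← ht_def]
    ring
  have hAexp : ∀ a b : ℝ, vecNorm (A (a • W + b • D)) ^ 2 =
      a ^ 2 * α + 2 * a * b * β + b ^ 2 * γ := by
    intro a b
    rw [vecNorm_sq, map_add, _root_.map_smul, _root_.map_smul]
    have : ∀ i, ((a • A W + b • A D) i) ^ 2 =
        a ^ 2 * (A W i * A W i) + 2 * a * b * (A W i * A D i) + b ^ 2 * (A D i * A D i) := by
      intro i
      simp only [Pi.add_apply, Pi.smul_apply, smul_eq_mul]
      ring
    rw [Finset.sum_congr rfl fun i _ => this i]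
    simp only [Finset.sum_add_distrib, ← Finset.mul_sum, ← hα_def, ← hβ_def, ← hγ_def]
  have hPP : frobNorm P ^ 2 = d ^ 2 * w ^ 2 + 2 * d * w * t + w ^ 2 * d ^ 2 := by
    rw [frobNorm_sq, hP_def, hexp]
  have hQQ : frobNorm Q ^ 2 = d ^ 2 * w ^ 2 + 2 * d * (-w) * t + (-w) ^ 2 * d ^ 2 := by
    rw [frobNorm_sq, hQ_def, hexp]
  have hAP : vecNorm (A P) ^ 2 = d ^ 2 * α + 2 * d * w * β + w ^ 2 * γ := by
    rw [hP_def, hAexp]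
  have hAQ : vecNorm (A Q) ^ 2 = d ^ 2 * α + 2 * d * (-w) * β + (-w) ^ 2 * γ := by
    rw [hQ_def, hAexp]
  rw [hPP, hAP] at h1
  rw [hQQ, hAQ] at h2
  have h3 : w * d * (t - β) ≤ δ * (w * d) * (w * d) := by nlinarith [h1, h2]
  have hwd : 0 < w * d := mul_pos hw hd
  have h4 : w * d * (t - β) ≤ w * d * (δ * (w * d)) := by
    calc w * d * (t - β) ≤ δ * (w * d) * (w * d) := h3
      _ = w * d * (δ * (w * d)) := by ring
  have h5 : t - β ≤ δ * (w * d) := le_of_mul_le_mul_left h4 hwd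
  calc t - β ≤ δ * (w * d) := h5
    _ = δ * w * d := by ring

end Aux

set_option maxHeartbeats 1000000 in
/-- Theorem 5.1: convergence of IHTMS (iterative hard thresholding with matrix
shrinkage) for exact rank-r data. -/
theorem ihtms_convergence {m n p r : ℕ} (hmn : m ≤ n)
    (A : Matrix (Fin m) (Fin n) ℝ →ₗ[ℝ] (Fin p → ℝ))
    (Aadj : (Fin p → ℝ) →ₗ[ℝ] Matrix (Fin m) (Fin n) ℝ)
    (hadj : ∀ (X : Matrix (Fin m) (Fin n) ℝ) (c : Fin p → ℝ),
      ∑ i, A X i * c i = frobInner (Aadj c) X)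
    (δ : ℝ) (hδ : 0 ≤ δ) (hδsmall : δ < 1 / Real.sqrt 32)
    (hRIP : ∀ X : Matrix (Fin m) (Fin n) ℝ, X.rank ≤ 3 * r →
      (1 - δ) * frobNorm X ^ 2 ≤ vecNorm (A X) ^ 2 ∧
        vecNorm (A X) ^ 2 ≤ (1 + δ) * frobNorm X ^ 2)
    (μ : ℝ) (hμ : 0 < μ)
    (Xr : Matrix (Fin m) (Fin n) ℝ) (hXr : Xr.rank ≤ r)
    (e : Fin p → ℝ) (b : Fin p → ℝ) (hb : b = A Xr + e)
    (X : ℕ → Matrix (Fin m) (Fin n) ℝ) (Y : ℕ → Matrix (Fin m) (Fin n) ℝ)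
    (hX0 : (X 0).rank ≤ r)
    (hY : ∀ k, Y (k + 1) = X k - Aadj (A (X k) - b))
    (hXstep : ∀ k, ∃ Z, IsSoftShrink μ (Y (k + 1)) Z ∧ IsBestRankApprox r Z (X (k + 1))) :
    ∀ k, frobNorm (Xr - X k) ≤
      (1 / 2 : ℝ) ^ k * frobNorm (Xr - X 0) + 4.34 * vecNorm e +
        4 * μ * Real.sqrt m := by
  -- numeric facts about δ
  have hsqrt32 : (4 : ℝ) ≤ Real.sqrt 32 := by
    rw [show (4:ℝ) = Real.sqrt 16 by
      rw [show (16:ℝ) = 4 ^ 2 by norm_num, Real.sqrt_sq (by norm_num : (0:ℝ) ≤ 4)]]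
    exact Real.sqrt_le_sqrt (by norm_num)
  have hδ4 : δ ≤ 1 / 4 := by
    have h32pos : (0:ℝ) < Real.sqrt 32 := lt_of_lt_of_le (by norm_num) hsqrt32
    have : 1 / Real.sqrt 32 ≤ 1 / 4 :=
      one_div_le_one_div_of_le (by norm_num) hsqrt32
    linarith
  have hsqrt565 : (5.65 : ℝ) ≤ Real.sqrt 32 := by
    rw [show (5.65:ℝ) = Real.sqrt (5.65 ^ 2) by
      rw [Real.sqrt_sq (by norm_num : (0:ℝ) ≤ 5.65)]]
    exact Real.sqrt_le_sqrt (by norm_num)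
  have hδval : δ ≤ 0.177225 := by
    have h565pos : (0:ℝ) < (5.65:ℝ) := by norm_num
    have : 1 / Real.sqrt 32 ≤ 1 / 5.65 :=
      one_div_le_one_div_of_le h565pos hsqrt565
    have h2 : (1:ℝ) / 5.65 ≤ 0.177225 := by norm_num
    linarith
  have hsqrt1δ : Real.sqrt (1 + δ) ≤ 1.085 := by
    rw [show (1.085:ℝ) = Real.sqrt (1.085 ^ 2) by
      rw [Real.sqrt_sq (by norm_num : (0:ℝ) ≤ 1.085)]]
    exact Real.sqrt_le_sqrt (by nlinarith)
  -- ranks of iterates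
  have hXrank : ∀ k, (X k).rank ≤ r := by
    intro k
    induction k with
    | zero => exact hX0
    | succ k _ => exact (hXstep k).choose_spec.2.1
  -- per-step bound
  have hstep : ∀ k, frobNorm (Xr - X (k + 1)) ≤
      (1 / 2) * frobNorm (Xr - X k) + 2.17 * vecNorm e + 2 * μ * Real.sqrt m := by
    intro k
    obtain ⟨Z, hshr, happ⟩ := hXstep k
    set W := Xr - X (k + 1) with hW_def
    set D := Xr - X k with hD_def
    set w := frobNorm W with hw_def
    set d := frobNorm D with hd_def
    have hw0 : 0 ≤ w := frobNorm_nonneg W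
    have hd0 : 0 ≤ d := frobNorm_nonneg D
    have he0 : 0 ≤ vecNorm e := vecNorm_nonneg e
    have hm0 : 0 ≤ Real.sqrt m := Real.sqrt_nonneg _
    -- shrinkage distance
    have hZdist : frobNorm (Y (k + 1) - Z) ≤ μ * Real.sqrt m :=
      softShrink_dist hmn hμ.le hshr
    -- best approximation
    have hbest : frobNorm (X (k + 1) - Z) ≤ frobNorm (Xr - Z) := happ.2 Xr hXr
    -- basic identity
    have hid : frobInner W W ≤ 2 * frobInner W (Xr - Z) := by
      have hexp := frobInner_expand (X (k + 1) - Z) (Xr - Z)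
      have hWeq : Xr - Z - (X (k + 1) - Z) = W := by rw [hW_def]; abel
      rw [hWeq] at hexp
      have hsq : frobInner (X (k + 1) - Z) (X (k + 1) - Z) ≤ frobInner (Xr - Z) (Xr - Z) := by
        rw [← frobNorm_sq, ← frobNorm_sq]
        exact pow_le_pow_left₀ (frobNorm_nonneg _) hbest 2
      linarith
    -- split Xr - Z
    have hsplit : frobInner W (Xr - Z) =
        frobInner W (Xr - Y (k + 1)) + frobInner W (Y (k + 1) - Z) := by
      rw [← frobInner_add_right]
      have : Xr - Y (k + 1) + (Y (k + 1) - Z) = Xr - Z := by abel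
      rw [this]
    -- bound the shrinkage part
    have hshrbd : frobInner W (Y (k + 1) - Z) ≤ w * (μ * Real.sqrt m) := by
      calc frobInner W (Y (k + 1) - Z) ≤ w * frobNorm (Y (k + 1) - Z) := frobInner_le _ _
        _ ≤ w * (μ * Real.sqrt m) := mul_le_mul_of_nonneg_left hZdist hw0
    -- rewrite Xr - Y (k+1)
    have hXrY : Xr - Y (k + 1) = D - Aadj (A D) - Aadj e := by
      rw [hY k, hb]
      have hc : A (X k) - (A Xr + e) = -(A D) - e := by
        rw [hD_def, map_sub]
        abel
      rw [hc, map_sub, map_neg]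
      rw [hD_def]
      abel
    have hmain : frobInner W (Xr - Y (k + 1)) =
        frobInner W D - (∑ i, A W i * A D i) - (∑ i, A W i * e i) := by
      rw [hXrY, frobInner_sub_right, frobInner_sub_right]
      rw [frobInner_comm W (Aadj (A D)), frobInner_comm W (Aadj e)]
      rw [← hadj W (A D), ← hadj W e]
    -- rank facts
    have hrkW : W.rank ≤ 3 * r := by
      have h1 : W.rank ≤ Xr.rank + (-(X (k+1))).rank := by
        rw [hW_def, sub_eq_add_neg]
        exact rank_add_le _ _
      have h2 : (-(X (k+1))).rank ≤ (X (k+1)).rank := by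
        rw [show -(X (k+1)) = (-1 : ℝ) • (X (k+1)) by simp]
        exact rank_smul_le _ _
      have := hXrank (k + 1)
      omega
    have hrk : ∀ a c : ℝ, (a • W + c • D).rank ≤ 3 * r := by
      intro a c
      have heq : a • W + c • D =
          (a + c) • Xr + (-a) • X (k + 1) + (-c) • X k := by
        rw [hW_def, hD_def]
        module
      rw [heq]
      exact rank_three _ _ _ hXr (hXrank (k + 1)) (hXrank k) _ _ _
    -- key cross bound
    have hcross : frobInner W D - ∑ i, A W i * A D i ≤ δ * w * d :=
      key_cross A hδ hRIP W D hrk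
    -- error term bound
    have herr : -(∑ i, A W i * e i) ≤ Real.sqrt (1 + δ) * w * vecNorm e := by
      have hcs : |∑ i, A W i * e i| ≤ vecNorm (A W) * vecNorm e := by
        have : (∑ i, A W i * e i) = @inner ℝ _ _ (vecE (A W)) (vecE e) := by
          rw [PiLp.inner_apply]
          simp [vecE, RCLike.inner_apply, mul_comm]
        rw [this, vecNorm_eq, vecNorm_eq]
        exact abs_real_inner_le_norm _ _
      have hAW : vecNorm (A W) ≤ Real.sqrt (1 + δ) * w := by
        have h1 := (hRIP W hrkW).2
        have h2 : vecNorm (A W) = Real.sqrt (vecNorm (A W) ^ 2) := by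
          rw [Real.sqrt_sq (vecNorm_nonneg _)]
        rw [h2]
        calc Real.sqrt (vecNorm (A W) ^ 2) ≤ Real.sqrt ((1 + δ) * w ^ 2) :=
              Real.sqrt_le_sqrt h1
          _ = Real.sqrt (1 + δ) * w := by
              rw [Real.sqrt_mul (by linarith), Real.sqrt_sq hw0]
      calc -(∑ i, A W i * e i) ≤ |∑ i, A W i * e i| := neg_le_abs _
        _ ≤ vecNorm (A W) * vecNorm e := hcs
        _ ≤ Real.sqrt (1 + δ) * w * vecNorm e :=
            mul_le_mul_of_nonneg_right hAW he0
    -- collect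
    have hww : w * w ≤ w * (2 * δ * d + 2 * Real.sqrt (1 + δ) * vecNorm e
        + 2 * μ * Real.sqrt m) := by
      have hWW : frobInner W W = w * w := by
        rw [← frobNorm_sq]; ring
      have hrhs : w * (2 * δ * d + 2 * Real.sqrt (1 + δ) * vecNorm e
          + 2 * μ * Real.sqrt m) = 2 * (δ * w * d)
          + 2 * (Real.sqrt (1 + δ) * w * vecNorm e) + 2 * (w * (μ * Real.sqrt m)) := by
        ring
      rw [hrhs, ← hWW]
      linarith [hid, hsplit, hshrbd, hmain, hcross, herr]
    set c := 2 * δ * d + 2 * Real.sqrt (1 + δ) * vecNorm e + 2 * μ * Real.sqrt m with hc_def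
    have hc0 : 0 ≤ c := by
      have : 0 ≤ Real.sqrt (1 + δ) := Real.sqrt_nonneg _
      have : 0 ≤ 2 * δ * d := by positivity
      positivity
    have hwc : w ≤ c := by
      rcases le_or_gt w c with h | h
      · exact h
      · exfalso
        have hwpos : 0 < w := lt_of_le_of_lt hc0 h
        have := mul_lt_mul_of_pos_left h hwpos
        linarith
    -- numeric cleanup
    calc w ≤ c := hwc
      _ ≤ (1 / 2) * d + 2.17 * vecNorm e + 2 * μ * Real.sqrt m := by
          rw [hc_def]
          have h1 : 2 * δ * d ≤ (1 / 2) * d :=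
            mul_le_mul_of_nonneg_right (by linarith) hd0
          have h2 : 2 * Real.sqrt (1 + δ) * vecNorm e ≤ 2.17 * vecNorm e :=
            mul_le_mul_of_nonneg_right (by linarith) he0
          linarith
  -- induction
  intro k
  have he0 : 0 ≤ vecNorm e := vecNorm_nonneg e
  have hm0 : 0 ≤ Real.sqrt m := Real.sqrt_nonneg _
  have hc0 : 0 ≤ 2.17 * vecNorm e + 2 * μ * Real.sqrt m := by positivity
  have hmain : ∀ k, frobNorm (Xr - X k) ≤
      (1 / 2 : ℝ) ^ k * frobNorm (Xr - X 0) +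
        (2 - 2 * (1 / 2 : ℝ) ^ k) * (2.17 * vecNorm e + 2 * μ * Real.sqrt m) := by
    intro k
    induction k with
    | zero => simp
    | succ k ih =>
      have h1 := hstep k
      have h2 : (0:ℝ) < (1/2 : ℝ) ^ k := by positivity
      calc frobNorm (Xr - X (k + 1))
          ≤ (1 / 2) * frobNorm (Xr - X k) + 2.17 * vecNorm e + 2 * μ * Real.sqrt m := h1
        _ ≤ (1 / 2) * ((1 / 2 : ℝ) ^ k * frobNorm (Xr - X 0) +
              (2 - 2 * (1 / 2 : ℝ) ^ k) * (2.17 * vecNorm e + 2 * μ * Real.sqrt m)) +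
              2.17 * vecNorm e + 2 * μ * Real.sqrt m := by linarith
        _ = (1 / 2 : ℝ) ^ (k + 1) * frobNorm (Xr - X 0) +
              (2 - 2 * (1 / 2 : ℝ) ^ (k + 1)) * (2.17 * vecNorm e + 2 * μ * Real.sqrt m) := by
            ring
  have h2 : (0:ℝ) < (1/2 : ℝ) ^ k := by positivity
  have := hmain k
  have hfinal : (2 - 2 * (1 / 2 : ℝ) ^ k) * (2.17 * vecNorm e + 2 * μ * Real.sqrt m) ≤
      2 * (2.17 * vecNorm e + 2 * μ * Real.sqrt m) := by nlinarith
  have : frobNorm (Xr - X k) ≤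
      (1 / 2 : ℝ) ^ k * frobNorm (Xr - X 0) + 2 * (2.17 * vecNorm e + 2 * μ * Real.sqrt m) := by
    linarith
  calc frobNorm (Xr - X k) ≤
      (1 / 2 : ℝ) ^ k * frobNorm (Xr - X 0) + 2 * (2.17 * vecNorm e + 2 * μ * Real.sqrt m) := this
    _ = (1 / 2 : ℝ) ^ k * frobNorm (Xr - X 0) + 4.34 * vecNorm e + 4 * μ * Real.sqrt m := by
        ring
end
end
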